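/- Let A be a quasitriangular bialgebra over a field F with R-matrix R, (ψ, J) a twist pair for A, and K an invertible element of A with Δ(K) = J⁻¹·(1⊗K)·R^ψ·(K⊗1). Define the algebra automorphism ξ = Ad(K⁻¹)∘ψ of A (where Ad(K⁻¹)(a) = K⁻¹·a·K) and set B_ξ = { a ∈ A : (ξ⊗id)(Δ(a)) = Δ(a) }. Then: (i) B_ξ is a right coideal subalgebra of A contained in the fixed-point subalgebra A^ξ, and it contains every right coideal subalgebra of A contained in A^ξ; (ii) the tensor K-matrix 𝕂 = (R^ψ)₂₁·(1⊗K)·R lies in B_ξ⊗A (the image of B_ξ⊗A in A⊗A). -/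

import Mathlib

open TensorProduct

noncomputable section

variable (F : Type*) [Field F]

section BialgDefs

variable (A : Type*) [Ring A] [Bialgebra F A]

/-- Conjugation by an invertible element, as an algebra automorphism. -/
def conjEquiv (g gi : A) (h1 : g * gi = 1) (h2 : gi * g = 1) : A ≃ₐ[F] A where
  toFun a := g * a * gi
  invFun a := gi * a * g
  left_inv a := by simp only [← mul_assoc]; rw [h2, one_mul, mul_assoc, h2, mul_one]
  right_inv a := by simp only [← mul_assoc]; rw [h1, one_mul, mul_assoc, h1, mul_one]
  map_mul' a b := by
    show g * (a * b) * gi = (g * a * gi) * (g * b * gi)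
    simp only [mul_assoc]; rw [← mul_assoc gi g, h2, one_mul]
  map_add' a b := by
    show g * (a + b) * gi = g * a * gi + g * b * gi
    rw [mul_add, add_mul]
  commutes' r := by
    show g * algebraMap F A r * gi = algebraMap F A r
    rw [← Algebra.commutes r g, mul_assoc, h1, mul_one]

/-- The coproduct of `A`, as an algebra map. -/
def cop : A →ₐ[F] A ⊗[F] A := Bialgebra.comulAlgHom F A

/-- The flip of the two tensor legs. -/
def flipT : (A ⊗[F] A) ≃ₐ[F] A ⊗[F] A := Algebra.TensorProduct.comm F A A

/-- The opposite coproduct. -/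
def copOp : A →ₐ[F] A ⊗[F] A := (flipT F A).toAlgHom.comp (cop F A)

/-- `X ↦ X₁₂` on triple tensors. -/
def i12 : (A ⊗[F] A) →ₐ[F] A ⊗[F] (A ⊗[F] A) :=
  Algebra.TensorProduct.map (AlgHom.id F A) Algebra.TensorProduct.includeLeft

/-- `X ↦ X₁₃` on triple tensors. -/
def i13 : (A ⊗[F] A) →ₐ[F] A ⊗[F] (A ⊗[F] A) :=
  Algebra.TensorProduct.map (AlgHom.id F A) Algebra.TensorProduct.includeRight

/-- `X ↦ X₂₃` on triple tensors. -/
def i23 : (A ⊗[F] A) →ₐ[F] A ⊗[F] (A ⊗[F] A) :=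
  Algebra.TensorProduct.includeRight

/-- `Δ ⊗ id` landing in `A ⊗ (A ⊗ A)`. -/
def cop12 : (A ⊗[F] A) →ₐ[F] A ⊗[F] (A ⊗[F] A) :=
  (Algebra.TensorProduct.assoc F F F A A A).toAlgHom.comp
    (Algebra.TensorProduct.map (cop F A) (AlgHom.id F A))

/-- `id ⊗ Δ`. -/
def cop23 : (A ⊗[F] A) →ₐ[F] A ⊗[F] (A ⊗[F] A) :=
  Algebra.TensorProduct.map (AlgHom.id F A) (cop F A)

/-- `ε ⊗ id`. -/
def counit2l : (A ⊗[F] A) →ₐ[F] A :=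
  (Algebra.TensorProduct.lid F A).toAlgHom.comp
    (Algebra.TensorProduct.map (Bialgebra.counitAlgHom F A) (AlgHom.id F A))

/-- `id ⊗ ε`. -/
def counit2r : (A ⊗[F] A) →ₐ[F] A :=
  (Algebra.TensorProduct.rid F F A).toAlgHom.comp
    (Algebra.TensorProduct.map (AlgHom.id F A) (Bialgebra.counitAlgHom F A))

/-- `ψ ⊗ φ` on `A ⊗ A`. -/
def mapT (ψ φ : A →ₐ[F] A) : (A ⊗[F] A) →ₐ[F] A ⊗[F] A := Algebra.TensorProduct.map ψ φ

/-- `R^ψ = (ψ ⊗ id)(R)`. -/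
def rpsi (R : A ⊗[F] A) (ψ : A ≃ₐ[F] A) : A ⊗[F] A :=
  Algebra.TensorProduct.map ψ.toAlgHom (AlgHom.id F A) R

/-- `A` is quasitriangular with R-matrix `R` (with inverse `Ri`). -/
structure IsQT (R Ri : A ⊗[F] A) : Prop where
  mulInv : R * Ri = 1
  invMul : Ri * R = 1
  intw : ∀ a : A, R * cop F A a * Ri = copOp F A a
  copL : cop12 F A R = i13 F A R * i23 F A R
  copR : cop23 F A R = i13 F A R * i12 F A R

/-- `(ψ, J)` is a twist pair (with `Ji` the inverse of `J`). -/
structure IsTwistPair (R Ri J Ji : A ⊗[F] A) (ψ : A ≃ₐ[F] A) : Prop where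
  mulInv : J * Ji = 1
  invMul : Ji * J = 1
  cocycle : i12 F A J * cop12 F A J = i23 F A J * cop23 F A J
  counitL : counit2l F A J = 1
  counitR : counit2r F A J = 1
  intw : ∀ a : A,
    mapT F A ψ.toAlgHom ψ.toAlgHom (copOp F A (ψ.symm a)) = J * cop F A a * Ji
  rrel : flipT F A (mapT F A ψ.toAlgHom ψ.toAlgHom R) = flipT F A J * R * Ji

/-- The image of `s ⊗ A` inside `A ⊗ A`, for a subset `s ⊆ A`. -/
def legSpan (s : Set A) : Submodule F (A ⊗[F] A) :=
  Submodule.span F {x : A ⊗[F] A | ∃ b ∈ s, ∃ a : A, x = b ⊗ₜ[F] a}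

/-- `B` is a right coideal subalgebra of `A`. -/
def IsRightCoideal (B : Subalgebra F A) : Prop :=
  ∀ b ∈ B, cop F A b ∈ legSpan F A (B : Set A)

/-- The tensor K-matrix `𝕂 = (R^ψ)₂₁ ⬝ (1 ⊗ K) ⬝ R`. -/
def tenK (R : A ⊗[F] A) (ψ : A ≃ₐ[F] A) (K : A) : A ⊗[F] A :=
  flipT F A (rpsi F A R ψ) * ((1 : A) ⊗ₜ[F] K) * R

/-- `(ψ, J, K)` is a cylindrical structure on `(A, B)`. -/
structure IsCylindrical (R Ri : A ⊗[F] A) (B : Subalgebra F A) (J Ji : A ⊗[F] A)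
    (ψ : A ≃ₐ[F] A) (K Kinv : A) : Prop where
  twist : IsTwistPair F A R Ri J Ji ψ
  kMulInv : K * Kinv = 1
  kInvMul : Kinv * K = 1
  intwB : ∀ b ∈ B, K * b * Kinv = ψ b
  support : tenK F A R ψ K ∈ legSpan F A (B : Set A)
  copK : cop F A K = Ji * (((1 : A) ⊗ₜ[F] K) * (rpsi F A R ψ * (K ⊗ₜ[F] (1 : A))))

end BialgDefs

section ModuleDefs

variable (A : Type*) [Ring A] [Bialgebra F A]

/-- Right partial transpose on `End V ⊗ End W`. -/
def pt2 (V W : Type*) [AddCommGroup V] [Module F V] [AddCommGroup W] [Module F W] :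
    (Module.End F V ⊗[F] Module.End F W) →ₗ[F]
      (Module.End F V ⊗[F] Module.End F (Module.Dual F W)) :=
  TensorProduct.map LinearMap.id (Module.Dual.transpose (R := F) (M := W) (M' := W))

/-- Identification `End V ⊗ End (W^∨∨) ≃ End V ⊗ End W` via the canonical iso `W ≅ W^∨∨`. -/
def ddIdent (V W : Type*) [AddCommGroup V] [Module F V] [AddCommGroup W] [Module F W]
    [FiniteDimensional F W] :
    (Module.End F V ⊗[F] Module.End F (Module.Dual F (Module.Dual F W))) →ₗ[F]
      (Module.End F V ⊗[F] Module.End F W) :=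
  TensorProduct.map LinearMap.id ((Module.evalEquiv F W).conj.symm).toLinearMap

/-- The right partial trace `A ⊗ End V → A`. -/
def trace2 (V : Type*) [AddCommGroup V] [Module F V] :
    (A ⊗[F] Module.End F V) →ₗ[F] A :=
  (TensorProduct.rid F A).toLinearMap.comp
    (TensorProduct.map LinearMap.id (LinearMap.trace F V))

/-- `T_{•,V}`: act with the second leg on `V`. -/
def actRight (V : Type*) [AddCommGroup V] [Module F V] (ρV : A →ₐ[F] Module.End F V) :
    (A ⊗[F] A) →ₐ[F] A ⊗[F] Module.End F V :=
  Algebra.TensorProduct.map (AlgHom.id F A) ρV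

/-- The boundary transfer matrix `Tr₂(𝕂₍•,V₎)`. -/
def transfer (V : Type*) [AddCommGroup V] [Module F V] (ρV : A →ₐ[F] Module.End F V)
    (T : A ⊗[F] A) : A :=
  trace2 F A V (actRight F A V ρV T)

/-- The module structure on `V ⊗ W` obtained from `Δ`. -/
def tensorRep (V W : Type*) [AddCommGroup V] [Module F V] [AddCommGroup W] [Module F W]
    (ρV : A →ₐ[F] Module.End F V) (ρW : A →ₐ[F] Module.End F W) :
    A →ₐ[F] Module.End F (V ⊗[F] W) :=
  (Module.endTensorEndAlgHom (R := F) (S := F) (A := F) (M := V) (N := W)).comp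
    ((Algebra.TensorProduct.map ρV ρW).comp (cop F A))

/-- `g` (with inverse `gi`) is a boundary gauge transformation for the twist pair `(ψ, J)`. -/
def IsBoundaryGauge (R J : A ⊗[F] A) (ψ : A ≃ₐ[F] A) (g gi : A)
    (hg1 : g * gi = 1) (hg2 : gi * g = 1) : Prop :=
  ∀ (V W : Type) [AddCommGroup V] [Module F V] [FiniteDimensional F V]
    [AddCommGroup W] [Module F W] [FiniteDimensional F W]
    (ρV : A →ₐ[F] Module.End F V) (ρW : A →ₐ[F] Module.End F W),
    let X := pt2 F V W
      ((Algebra.TensorProduct.map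
        (ρV.comp (ψ.trans (conjEquiv F A g gi hg1 hg2)).toAlgHom) ρW) R)
    IsUnit X ∧ IsUnit (pt2 F V (Module.Dual F W) (Ring.inverse X)) ∧
      (Algebra.TensorProduct.map ρV ρW) ((g ⊗ₜ[F] g) * J * cop F A gi) =
        ddIdent F V W (Ring.inverse (pt2 F V (Module.Dual F W) (Ring.inverse X)))

end ModuleDefs

/-- The automorphism `ξ = Ad(K⁻¹) ∘ ψ`. -/
def xiAut {F A : Type*} [Field F] [Ring A] [Bialgebra F A] (ψ : A ≃ₐ[F] A)
    (K Kinv : A) (hK1 : K * Kinv = 1) (hK2 : Kinv * K = 1) : A ≃ₐ[F] A :=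
  ψ.trans (conjEquiv F A Kinv K hK2 hK1)

/-- The set `B_ξ = { a ∈ A | (ξ ⊗ id)(Δ(a)) = Δ(a) }`. -/
def BxiSet {F A : Type*} [Field F] [Ring A] [Bialgebra F A] (ψ : A ≃ₐ[F] A)
    (K Kinv : A) (hK1 : K * Kinv = 1) (hK2 : Kinv * K = 1) : Set A :=
  {a : A | (mapT F A (xiAut ψ K Kinv hK1 hK2).toAlgHom (AlgHom.id F A)) (cop F A a) =
    cop F A a}

section Aux

variable {F A : Type*} [Field F] [Ring A] [Bialgebra F A]

example : Module.Flat F A := inferInstance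

lemma mapT_tmul (f g : A →ₐ[F] A) (a b : A) :
    mapT F A f g (a ⊗ₜ[F] b) = f a ⊗ₜ[F] g b := rfl

lemma flipT_tmul (a b : A) : flipT F A (a ⊗ₜ[F] b) = b ⊗ₜ[F] a := rfl

lemma i13_tmul (a b : A) : i13 F A (a ⊗ₜ[F] b) = a ⊗ₜ[F] ((1:A) ⊗ₜ[F] b) := rfl
lemma i12_tmul (a b : A) : i12 F A (a ⊗ₜ[F] b) = a ⊗ₜ[F] (b ⊗ₜ[F] (1:A)) := rfl
lemma i23_apply (x : A ⊗[F] A) : i23 F A x = (1:A) ⊗ₜ[F] x := rfl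
lemma cop23_tmul (a b : A) : cop23 F A (a ⊗ₜ[F] b) = a ⊗ₜ[F] cop F A b := rfl
lemma cop12_tmul (a b : A) :
    cop12 F A (a ⊗ₜ[F] b) = (Algebra.TensorProduct.assoc F F F A A A) (cop F A a ⊗ₜ[F] b) := rfl

lemma algAssoc_eq (z : (A ⊗[F] A) ⊗[F] A) :
    (Algebra.TensorProduct.assoc F F F A A A) z = (TensorProduct.assoc F A A A) z := rfl

/-- cyclic permutation `a ⊗ (b ⊗ c) ↦ b ⊗ (c ⊗ a)`. -/
def sigma3 (F A : Type*) [Field F] [Ring A] [Bialgebra F A] :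
    (A ⊗[F] (A ⊗[F] A)) →ₐ[F] A ⊗[F] (A ⊗[F] A) :=
  (Algebra.TensorProduct.assoc F F F A A A).toAlgHom.comp
    (Algebra.TensorProduct.comm F A (A ⊗[F] A)).toAlgHom

lemma sigma3_tmul (a b c : A) :
    sigma3 F A (a ⊗ₜ[F] (b ⊗ₜ[F] c)) = b ⊗ₜ[F] (c ⊗ₜ[F] a) := rfl

end Aux
section Aux2

variable {F A : Type*} [Field F] [Ring A] [Bialgebra F A]

lemma mapT_flipT (f : A →ₐ[F] A) (x : A ⊗[F] A) :
    mapT F A f (AlgHom.id F A) (flipT F A x)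
      = flipT F A (mapT F A (AlgHom.id F A) f x) := by
  induction x using TensorProduct.induction_on with
  | zero => simp
  | tmul a b => rfl
  | add x y hx hy => rw [map_add, map_add, map_add, map_add, hx, hy]

lemma mapT_mapT (f g : A →ₐ[F] A) (x : A ⊗[F] A) :
    mapT F A (AlgHom.id F A) f (mapT F A g (AlgHom.id F A) x) = mapT F A g f x := by
  induction x using TensorProduct.induction_on with
  | zero => simp
  | tmul a b => rfl
  | add x y hx hy => rw [map_add, map_add, map_add, hx, hy]

lemma xiAut_apply (ψ : A ≃ₐ[F] A) (K Kinv : A) (hK1 : K * Kinv = 1) (hK2 : Kinv * K = 1)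
    (a : A) : xiAut ψ K Kinv hK1 hK2 a = Kinv * ψ a * K := rfl

lemma mapT_xi (ψ : A ≃ₐ[F] A) (K Kinv : A) (hK1 : K * Kinv = 1) (hK2 : Kinv * K = 1)
    (x : A ⊗[F] A) :
    mapT F A (xiAut ψ K Kinv hK1 hK2).toAlgHom (AlgHom.id F A) x
      = (Kinv ⊗ₜ[F] (1:A)) * mapT F A ψ.toAlgHom (AlgHom.id F A) x * (K ⊗ₜ[F] (1:A)) := by
  induction x using TensorProduct.induction_on with
  | zero => simp
  | tmul a b =>
      simp only [mapT_tmul, Algebra.TensorProduct.tmul_mul_tmul, one_mul, mul_one]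
      rfl
  | add x y hx hy => rw [map_add, map_add, hx, hy, mul_add, add_mul]

lemma tmul_one_mul_tmul_one (a b : A) :
    (a ⊗ₜ[F] (1:A)) * (b ⊗ₜ[F] (1:A)) = (a * b) ⊗ₜ[F] (1:A) := by
  rw [Algebra.TensorProduct.tmul_mul_tmul, mul_one]

/-- KEY: the tensor K-matrix is fixed by `ξ ⊗ id`. -/
lemma key_fix (R Ri : A ⊗[F] A) (hQT : IsQT F A R Ri)
    (ψ : A ≃ₐ[F] A) (J Ji : A ⊗[F] A) (hTP : IsTwistPair F A R Ri J Ji ψ)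
    (K Kinv : A) (hK1 : K * Kinv = 1) (hK2 : Kinv * K = 1)
    (hcop : cop F A K = Ji * (((1 : A) ⊗ₜ[F] K) * (rpsi F A R ψ * (K ⊗ₜ[F] (1 : A))))) :
    mapT F A (xiAut ψ K Kinv hK1 hK2).toAlgHom (AlgHom.id F A) (tenK F A R ψ K)
      = tenK F A R ψ K := by
  set Ψ := mapT F A ψ.toAlgHom (AlgHom.id F A) with hΨ
  have hRψ : rpsi F A R ψ = Ψ R := rfl
  have hKi1 : (K ⊗ₜ[F] (1:A)) * (Kinv ⊗ₜ[F] (1:A)) = 1 := by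
    rw [tmul_one_mul_tmul_one, hK1, Algebra.TensorProduct.one_def]
  have hKi2 : (Kinv ⊗ₜ[F] (1:A)) * (K ⊗ₜ[F] (1:A)) = 1 := by
    rw [tmul_one_mul_tmul_one, hK2, Algebra.TensorProduct.one_def]
  -- step 1: Ψ(tenK)
  have h1 : Ψ (tenK F A R ψ K)
      = (flipT F A J * R * Ji) * ((1:A) ⊗ₜ[F] K) * Ψ R := by
    rw [tenK, map_mul, map_mul, hRψ]
    congr 1
    · congr 1
      · rw [mapT_flipT, mapT_mapT]
        exact hTP.rrel
      · show (ψ 1) ⊗ₜ[F] K = (1:A) ⊗ₜ[F] K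
        rw [map_one]
  -- step 2: Ji * (1⊗K) * ΨR = Δ(K) * (Kinv ⊗ 1)
  have h2 : Ji * ((1:A) ⊗ₜ[F] K) * Ψ R = cop F A K * (Kinv ⊗ₜ[F] (1:A)) := by
    rw [hcop, hRψ]
    rw [mul_assoc, mul_assoc, mul_assoc, mul_assoc, hKi1, mul_one]
  -- step 3: R * Δ(K) = Δᵒᵖ(K) * R
  have h3 : R * cop F A K = copOp F A K * R := by
    have := hQT.intw K
    calc R * cop F A K = R * cop F A K * (Ri * R) := by rw [hQT.invMul, mul_one]
      _ = (R * cop F A K * Ri) * R := by rw [mul_assoc, mul_assoc, mul_assoc]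
      _ = copOp F A K * R := by rw [this]
  -- step 4: flip J * Δᵒᵖ(K) = (K⊗1) * flip(ΨR) * (1⊗K)
  have h4 : flipT F A J * copOp F A K
      = (K ⊗ₜ[F] (1:A)) * flipT F A (Ψ R) * ((1:A) ⊗ₜ[F] K) := by
    have hJc : J * cop F A K = ((1:A) ⊗ₜ[F] K) * (Ψ R * (K ⊗ₜ[F] (1:A))) := by
      rw [hcop, hRψ, ← mul_assoc, hTP.mulInv, one_mul]
    have : copOp F A K = flipT F A (cop F A K) := rfl
    rw [this, ← map_mul, hJc, map_mul, map_mul, flipT_tmul, flipT_tmul]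
    rw [← mul_assoc]
  calc mapT F A (xiAut ψ K Kinv hK1 hK2).toAlgHom (AlgHom.id F A) (tenK F A R ψ K)
      = (Kinv ⊗ₜ[F] (1:A)) * Ψ (tenK F A R ψ K) * (K ⊗ₜ[F] (1:A)) := mapT_xi ..
    _ = (Kinv ⊗ₜ[F] (1:A)) * ((flipT F A J * R * Ji) * ((1:A) ⊗ₜ[F] K) * Ψ R)
          * (K ⊗ₜ[F] (1:A)) := by rw [h1]
    _ = (Kinv ⊗ₜ[F] (1:A)) * (flipT F A J * (R * (Ji * ((1:A) ⊗ₜ[F] K) * Ψ R)))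
          * (K ⊗ₜ[F] (1:A)) := by simp only [mul_assoc]
    _ = (Kinv ⊗ₜ[F] (1:A)) * (flipT F A J * (R * (cop F A K * (Kinv ⊗ₜ[F] (1:A)))))
          * (K ⊗ₜ[F] (1:A)) := by rw [h2]
    _ = (Kinv ⊗ₜ[F] (1:A)) * ((flipT F A J * copOp F A K) * (R * (Kinv ⊗ₜ[F] (1:A))))
          * (K ⊗ₜ[F] (1:A)) := by rw [← mul_assoc R, h3]; simp only [mul_assoc]
    _ = (Kinv ⊗ₜ[F] (1:A)) * (((K ⊗ₜ[F] (1:A)) * flipT F A (Ψ R) * ((1:A) ⊗ₜ[F] K))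
          * (R * (Kinv ⊗ₜ[F] (1:A)))) * (K ⊗ₜ[F] (1:A)) := by rw [h4]
    _ = ((Kinv ⊗ₜ[F] (1:A)) * (K ⊗ₜ[F] (1:A)))
          * (flipT F A (Ψ R) * ((1:A) ⊗ₜ[F] K) * R)
          * ((Kinv ⊗ₜ[F] (1:A)) * (K ⊗ₜ[F] (1:A))) := by simp only [mul_assoc]
    _ = tenK F A R ψ K := by rw [hKi2, one_mul, mul_one, tenK, hRψ]
end Aux2
section Aux3

variable {F A : Type*} [Field F] [Ring A] [Bialgebra F A]

lemma cop12_flipT (x : A ⊗[F] A) :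
    cop12 F A (flipT F A x) = sigma3 F A (cop23 F A x) := by
  induction x using TensorProduct.induction_on with
  | zero => simp
  | tmul a b =>
      rw [flipT_tmul, cop12_tmul, cop23_tmul]
      induction (cop F A b) using TensorProduct.induction_on with
      | zero => simp [TensorProduct.zero_tmul, TensorProduct.tmul_zero]
      | tmul u v => rfl
      | add x y hx hy =>
          rw [TensorProduct.add_tmul, TensorProduct.tmul_add, map_add, map_add, hx, hy]
  | add x y hx hy => rw [map_add, map_add, map_add, map_add, hx, hy]

lemma cop23_mapT (f : A →ₐ[F] A) (x : A ⊗[F] A) :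
    cop23 F A (mapT F A f (AlgHom.id F A) x)
      = Algebra.TensorProduct.map f (AlgHom.id F (A ⊗[F] A)) (cop23 F A x) := by
  induction x using TensorProduct.induction_on with
  | zero => simp
  | tmul a b => rfl
  | add x y hx hy => rw [map_add, map_add, map_add, map_add, hx, hy]

lemma sigma3_map_i13 (f : A →ₐ[F] A) (x : A ⊗[F] A) :
    sigma3 F A (Algebra.TensorProduct.map f (AlgHom.id F (A ⊗[F] A)) (i13 F A x))
      = i23 F A (flipT F A (mapT F A f (AlgHom.id F A) x)) := by
  induction x using TensorProduct.induction_on with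
  | zero => simp
  | tmul a b => rfl
  | add x y hx hy => simp only [map_add, hx, hy]

lemma sigma3_map_i12 (f : A →ₐ[F] A) (x : A ⊗[F] A) :
    sigma3 F A (Algebra.TensorProduct.map f (AlgHom.id F (A ⊗[F] A)) (i12 F A x))
      = i13 F A (flipT F A (mapT F A f (AlgHom.id F A) x)) := by
  induction x using TensorProduct.induction_on with
  | zero => simp
  | tmul a b => rfl
  | add x y hx hy => simp only [map_add, hx, hy]

lemma map3_i23 (f : A →ₐ[F] A) (x : A ⊗[F] A) :
    Algebra.TensorProduct.map f (AlgHom.id F (A ⊗[F] A)) (i23 F A x)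
      = i23 F A x := by
  rw [i23_apply]
  show f 1 ⊗ₜ[F] x = (1:A) ⊗ₜ[F] x
  rw [map_one]

lemma map3_i13 (f : A →ₐ[F] A) (x : A ⊗[F] A) :
    Algebra.TensorProduct.map f (AlgHom.id F (A ⊗[F] A)) (i13 F A x)
      = i13 F A (mapT F A f (AlgHom.id F A) x) := by
  induction x using TensorProduct.induction_on with
  | zero => simp
  | tmul a b => rfl
  | add x y hx hy => rw [map_add, map_add, map_add, map_add, hx, hy]

lemma cop12_one_tmul (K : A) :
    cop12 F A ((1:A) ⊗ₜ[F] K) = i13 F A ((1:A) ⊗ₜ[F] K) := by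
  rw [cop12_tmul, i13_tmul, map_one, Algebra.TensorProduct.one_def,
    Algebra.TensorProduct.assoc_tmul]

/-- `(Δ⊗id)` of the flipped element `S = (R^ψ)₂₁`. -/
lemma cop12_S (R Ri : A ⊗[F] A) (hQT : IsQT F A R Ri) (ψ : A ≃ₐ[F] A) :
    cop12 F A (flipT F A (rpsi F A R ψ))
      = i23 F A (flipT F A (rpsi F A R ψ)) * i13 F A (flipT F A (rpsi F A R ψ)) := by
  have hRψ : rpsi F A R ψ = mapT F A ψ.toAlgHom (AlgHom.id F A) R := rfl
  rw [hRψ, cop12_flipT, cop23_mapT, hQT.copR, map_mul, map_mul,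
    sigma3_map_i13, sigma3_map_i12]

/-- `(Δ⊗id)(𝕂) = S₂₃ · 𝕂₁₃ · R₂₃`. -/
lemma cop12_tenK (R Ri : A ⊗[F] A) (hQT : IsQT F A R Ri) (ψ : A ≃ₐ[F] A) (K : A) :
    cop12 F A (tenK F A R ψ K)
      = i23 F A (flipT F A (rpsi F A R ψ)) * i13 F A (tenK F A R ψ K) * i23 F A R := by
  rw [tenK, map_mul, map_mul, cop12_S R Ri hQT, cop12_one_tmul, hQT.copL,
    map_mul, map_mul]
  simp only [mul_assoc]

end Aux3
section Aux4

variable {F A : Type*} [Field F] [Ring A] [Bialgebra F A]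

lemma cop_apply' (a : A) : cop F A a = Coalgebra.comul a := rfl

lemma counit2r_tmul (a b : A) :
    counit2r F A (a ⊗ₜ[F] b) = Bialgebra.counitAlgHom F A b • a := by
  simp [counit2r, Algebra.TensorProduct.rid_tmul]

lemma counit2r_cop (a : A) : counit2r F A (cop F A a) = a := by
  have h : ∀ x : A ⊗[F] A, counit2r F A x
      = TensorProduct.rid F A (LinearMap.lTensor A (Coalgebra.counit) x) := by
    intro x
    induction x using TensorProduct.induction_on with
    | zero => simp
    | tmul u v =>
        rw [counit2r_tmul, LinearMap.lTensor_tmul, TensorProduct.rid_tmul]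
        rfl
    | add x y hx hy => rw [map_add, map_add, map_add, hx, hy]
  rw [h, cop_apply', Coalgebra.lTensor_counit_comul, TensorProduct.rid_tmul, one_smul]

lemma counit2r_mapT (f : A →ₐ[F] A) (x : A ⊗[F] A) :
    counit2r F A (mapT F A f (AlgHom.id F A) x) = f (counit2r F A x) := by
  induction x using TensorProduct.induction_on with
  | zero => simp
  | tmul a b =>
      rw [mapT_tmul, counit2r_tmul, counit2r_tmul, map_smul]
      rfl
  | add x y hx hy => rw [map_add, map_add, map_add, hx, hy, map_add]

lemma cop12_cop (a : A) : cop12 F A (cop F A a) = cop23 F A (cop F A a) := by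
  have h1 : ∀ x : A ⊗[F] A,
      Algebra.TensorProduct.map (cop F A) (AlgHom.id F A) x
        = LinearMap.rTensor A (Coalgebra.comul (R := F) (A := A)) x := by
    intro x
    induction x using TensorProduct.induction_on with
    | zero => simp
    | tmul u v => rfl
    | add x y hx hy => rw [map_add, map_add, hx, hy]
  have h2 : ∀ x : A ⊗[F] A,
      cop23 F A x = LinearMap.lTensor A (Coalgebra.comul (R := F) (A := A)) x := by
    intro x
    induction x using TensorProduct.induction_on with
    | zero => simp
    | tmul u v => rfl
    | add x y hx hy => rw [map_add, map_add, hx, hy]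
  show (Algebra.TensorProduct.assoc F F F A A A)
      (Algebra.TensorProduct.map (cop F A) (AlgHom.id F A) (cop F A a)) = _
  rw [h1, algAssoc_eq, cop_apply', Coalgebra.coassoc_apply, ← h2]

/-- The linear map whose kernel is `B_ξ`. -/
def phiL (F A : Type*) [Field F] [Ring A] [Bialgebra F A] (ξ : A ≃ₐ[F] A) :
    A →ₗ[F] A ⊗[F] A :=
  ((mapT F A ξ.toAlgHom (AlgHom.id F A)).toLinearMap ∘ₗ (cop F A).toLinearMap)
    - (cop F A).toLinearMap

lemma phiL_apply (ξ : A ≃ₐ[F] A) (a : A) :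
    phiL F A ξ a = mapT F A ξ.toAlgHom (AlgHom.id F A) (cop F A a) - cop F A a := rfl

lemma assoc_mapT (f : A →ₐ[F] A) (y : A ⊗[F] A) (b : A) :
    (Algebra.TensorProduct.assoc F F F A A A) ((mapT F A f (AlgHom.id F A) y) ⊗ₜ[F] b)
      = Algebra.TensorProduct.map f (AlgHom.id F (A ⊗[F] A))
          ((Algebra.TensorProduct.assoc F F F A A A) (y ⊗ₜ[F] b)) := by
  induction y using TensorProduct.induction_on with
  | zero => simp [TensorProduct.zero_tmul]
  | tmul u v => rfl
  | add x y hx hy =>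
      rw [map_add, TensorProduct.add_tmul, TensorProduct.add_tmul, map_add, map_add,
        map_add, hx, hy]

set_option synthInstance.maxHeartbeats 1000000 in
lemma bridge (ξ : A ≃ₐ[F] A) (x : A ⊗[F] A) :
    (TensorProduct.assoc F A A A) (LinearMap.rTensor A (phiL F A ξ) x)
      = Algebra.TensorProduct.map ξ.toAlgHom (AlgHom.id F (A ⊗[F] A)) (cop12 F A x)
        - cop12 F A x := by
  induction x using TensorProduct.induction_on with
  | zero => simp
  | tmul a b =>
      rw [LinearMap.rTensor_tmul, phiL_apply, TensorProduct.sub_tmul, map_sub,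
        cop12_tmul, ← algAssoc_eq, ← algAssoc_eq, assoc_mapT]
  | add x y hx hy =>
      rw [map_add, map_add, map_add, map_add, hx, hy]
      abel

set_option synthInstance.maxHeartbeats 1000000 in
lemma mem_legSpan_of_fix (ξ : A ≃ₐ[F] A) (x : A ⊗[F] A)
    (hx : Algebra.TensorProduct.map ξ.toAlgHom (AlgHom.id F (A ⊗[F] A)) (cop12 F A x)
      = cop12 F A x) :
    x ∈ legSpan F A
      {a : A | mapT F A ξ.toAlgHom (AlgHom.id F A) (cop F A a) = cop F A a} := by
  have h0 : LinearMap.rTensor A (phiL F A ξ) x = 0 := by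
    have hb := bridge ξ x
    rw [hx, sub_self] at hb
    exact (TensorProduct.assoc F A A A).injective (by rw [hb, map_zero])
  have hex := Module.Flat.rTensor_exact (R := F) A
    (LinearMap.exact_subtype_ker_map (phiL F A ξ))
  obtain ⟨y, hy⟩ := (hex x).mp h0
  rw [← hy]
  clear hy hx h0
  induction y using TensorProduct.induction_on with
  | zero => rw [map_zero]; exact Submodule.zero_mem _
  | tmul b a =>
      rw [LinearMap.rTensor_tmul]
      refine Submodule.subset_span ⟨b.1, ?_, a, rfl⟩
      have hb := LinearMap.mem_ker.mp b.2
      rw [phiL_apply] at hb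
      exact sub_eq_zero.mp hb
  | add x y hx hy => rw [map_add]; exact Submodule.add_mem _ hx hy

lemma mapT_fix_legSpan (ξ : A ≃ₐ[F] A) (s : Set A) (hfix : ∀ b ∈ s, ξ b = b)
    (x : A ⊗[F] A) (hx : x ∈ legSpan F A s) :
    mapT F A ξ.toAlgHom (AlgHom.id F A) x = x := by
  refine Submodule.span_induction ?_ ?_ ?_ ?_ hx
  · rintro _ ⟨b, hb, a, rfl⟩
    have hb' : ξ.toAlgHom b = b := hfix b hb
    rw [mapT_tmul, hb']
    rfl
  · exact map_zero _
  · intro u v _ _ hu hv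
    rw [map_add, hu, hv]
  · intro c u _ hu
    rw [map_smul, hu]

end Aux4
/-- `B_ξ` is a right coideal subalgebra of `A` contained in `A^ξ`,
maximal among such, and the tensor K-matrix lies in `B_ξ ⊗ A`. -/
theorem statement7 {F A : Type*} [Field F] [Ring A] [Bialgebra F A]
    (R Ri : A ⊗[F] A) (hQT : IsQT F A R Ri)
    (ψ : A ≃ₐ[F] A) (J Ji : A ⊗[F] A) (hTP : IsTwistPair F A R Ri J Ji ψ)
    (K Kinv : A) (hK1 : K * Kinv = 1) (hK2 : Kinv * K = 1)
    (hcop : cop F A K = Ji * (((1 : A) ⊗ₜ[F] K) * (rpsi F A R ψ * (K ⊗ₜ[F] (1 : A))))) :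
    (∃ S : Subalgebra F A, (S : Set A) = BxiSet ψ K Kinv hK1 hK2) ∧
    (∀ a ∈ BxiSet ψ K Kinv hK1 hK2,
      cop F A a ∈ legSpan F A (BxiSet ψ K Kinv hK1 hK2)) ∧
    (∀ a ∈ BxiSet ψ K Kinv hK1 hK2, xiAut ψ K Kinv hK1 hK2 a = a) ∧
    (∀ B : Subalgebra F A, IsRightCoideal F A B →
      (∀ b ∈ B, xiAut ψ K Kinv hK1 hK2 b = b) →
      (B : Set A) ⊆ BxiSet ψ K Kinv hK1 hK2) ∧
    tenK F A R ψ K ∈ legSpan F A (BxiSet ψ K Kinv hK1 hK2) := by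
  set ξ : A ≃ₐ[F] A := xiAut ψ K Kinv hK1 hK2 with hξ
  refine ⟨⟨AlgHom.equalizer
      ((mapT F A ξ.toAlgHom (AlgHom.id F A)).comp (cop F A)) (cop F A), rfl⟩,
    ?_, ?_, ?_, ?_⟩
  · -- right coideal
    intro a ha
    have ha' : mapT F A ξ.toAlgHom (AlgHom.id F A) (cop F A a) = cop F A a := ha
    refine mem_legSpan_of_fix ξ (cop F A a) ?_
    rw [cop12_cop, ← cop23_mapT, ha']
  · -- contained in fixed points
    intro a ha
    have ha' : mapT F A ξ.toAlgHom (AlgHom.id F A) (cop F A a) = cop F A a := ha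
    have h := congrArg (counit2r F A) ha'
    rw [counit2r_mapT, counit2r_cop] at h
    exact h
  · -- maximality
    intro B hB hfix a haB
    have hfix' : ∀ b ∈ (B : Set A), ξ b = b := fun b hb => hfix b hb
    show mapT F A ξ.toAlgHom (AlgHom.id F A) (cop F A a) = cop F A a
    exact mapT_fix_legSpan ξ (B : Set A) hfix' (cop F A a) (hB a haB)
  · -- the tensor K-matrix
    refine mem_legSpan_of_fix ξ (tenK F A R ψ K) ?_
    rw [cop12_tenK R Ri hQT, map_mul, map_mul, map3_i23, map3_i23, map3_i13,
      key_fix R Ri hQT ψ J Ji hTP K Kinv hK1 hK2 hcop]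
end
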